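/- arXiv:1005.0287 — 2 statements merged into one kernel-verified Lean document; each statement's English description precedes it below -/
import Mathlib

section
/- A local flat epimorphism of commutative monoids is an isomorphism: if φ: M → N is an epimorphism of commutative monoids, is local (φ⁻¹(N^×) = M^×), and the functor (− ⊗_M N) from M-sets to N-sets preserves finite limits, then φ is bijective. -/
section
open Relation
variable {M N : Type} [CommMonoid M] [CommMonoid N]

/-- The generating relation for the base change `T ⊗_M N` of an `M`-set `T` along
`φ : M →* N`: `(m • t, n) ∼ (t, φ(m) n)`. -/
inductive TensorRel (φ : M →* N) (T : Type) [MulAction M T] : T × N → T × N → Prop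
  | mk (m : M) (t : T) (n : N) : TensorRel φ T (m • t, n) (t, φ m * n)

/-- The base change `T ⊗_M N` of an `M`-set `T` along `φ : M →* N`:
the quotient of `T × N` by the equivalence relation generated by
`(m • t, n) ∼ (t, φ(m) n)`; it carries the `N`-action on the second factor. -/
abbrev MTensor (φ : M →* N) (T : Type) [MulAction M T] : Type :=
  Quotient (EqvGen.setoid (TensorRel φ T))

/-- The class of `(t, n)` in `T ⊗_M N`. -/
def MTensor.mk (φ : M →* N) {T : Type} [MulAction M T] (t : T) (n : N) :
    MTensor φ T :=
  Quotient.mk (EqvGen.setoid (TensorRel φ T)) (t, n)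

/-- The map `T ⊗_M N → U ⊗_M N` induced by a map of `M`-sets `f : T → U`. -/
def MTensor.map (φ : M →* N) {T U : Type} [MulAction M T] [MulAction M U]
    (f : T →[M] U) : MTensor φ T → MTensor φ U :=
  Quotient.lift (fun p => MTensor.mk φ (f p.1) p.2) (by
    intro a b h
    induction h with
    | rel x y hxy =>
      obtain ⟨m, t, n⟩ := hxy
      refine Quotient.sound ?_
      show EqvGen (TensorRel φ U) (f (m • t), n) (f t, φ m * n)
      rw [map_smul]
      exact EqvGen.rel _ _ (TensorRel.mk m (f t) n)
    | refl x => rfl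
    | symm x y _ ih => exact ih.symm
    | trans x y z _ _ ih₁ ih₂ => exact ih₁.trans ih₂)

/-- The comparison map `(T × U) ⊗_M N → (T ⊗_M N) × (U ⊗_M N)`. -/
def tensorProdCompare (φ : M →* N) (T U : Type) [MulAction M T] [MulAction M U] :
    MTensor φ (T × U) → MTensor φ T × MTensor φ U :=
  Quotient.lift (fun p => (MTensor.mk φ p.1.1 p.2, MTensor.mk φ p.1.2 p.2)) (by
    intro a b h
    induction h with
    | rel x y hxy =>
      obtain ⟨m, t, n⟩ := hxy
      exact Prod.ext (Quotient.sound (EqvGen.rel _ _ (TensorRel.mk m t.1 n)))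
        (Quotient.sound (EqvGen.rel _ _ (TensorRel.mk m t.2 n)))
    | refl x => rfl
    | symm x y _ ih => exact ih.symm
    | trans x y z _ _ ih₁ ih₂ => exact ih₁.trans ih₂)

/-- The equalizer of two maps of `M`-sets is an `M`-set. -/
instance tensorEqMulAction {T U : Type} [MulAction M T] [MulAction M U]
    (f g : T →[M] U) : MulAction M {t : T // f t = g t} where
  smul m t := ⟨m • t.1, by rw [map_smul, map_smul, t.2]⟩
  one_smul t := Subtype.ext (one_smul M t.1)
  mul_smul a b t := Subtype.ext (mul_smul a b t.1)

/-- The inclusion of the equalizer, as a map of `M`-sets. -/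
def tensorEqIncl {T U : Type} [MulAction M T] [MulAction M U] (f g : T →[M] U) :
    {t : T // f t = g t} →[M] T :=
  ⟨Subtype.val, fun _ _ => rfl⟩

/-- The comparison map from `E ⊗_M N` (`E` the equalizer of `f, g`) to the equalizer
of the induced maps `T ⊗_M N ⇉ U ⊗_M N`. -/
def tensorEqCompare (φ : M →* N) {T U : Type} [MulAction M T] [MulAction M U]
    (f g : T →[M] U) : MTensor φ {t : T // f t = g t} →
      {x : MTensor φ T // MTensor.map φ f x = MTensor.map φ g x} :=
  fun y => ⟨MTensor.map φ (tensorEqIncl f g) y, by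
    induction y using Quotient.inductionOn with
    | h p =>
      show MTensor.mk φ (f p.1.1) p.2 = MTensor.mk φ (g p.1.1) p.2
      rw [p.1.2]⟩

/-- `φ : M →* N` is flat: the base change functor `(− ⊗_M N)` from `M`-sets to `N`-sets
preserves finite limits, i.e. binary products, the terminal object and equalizers. -/
def MonFlat (φ : M →* N) : Prop :=
  (∀ (T U : Type) [MulAction M T] [MulAction M U],
      Function.Bijective (tensorProdCompare φ T U)) ∧
  (Nonempty (MTensor φ PUnit) ∧ Subsingleton (MTensor φ PUnit)) ∧
  (∀ (T U : Type) [MulAction M T] [MulAction M U] (f g : T →[M] U),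
      Function.Bijective (tensorEqCompare φ f g))

end

/-- `φ` is an epimorphism in the category of commutative monoids:
it is right-cancellable. -/
def MonEpi {M N : Type} [CommMonoid M] [CommMonoid N] (φ : M →* N) : Prop :=
  ∀ (P : Type) [CommMonoid P] (f g : N →* P), f.comp φ = g.comp φ → f = g

section Aux
variable {M N : Type} [CommMonoid M] [CommMonoid N]

/-- The canonical map `M ⊗_M N → N`, `(m, n) ↦ φ(m) n`. -/
def MTensor.toN (φ : M →* N) : MTensor φ M → N :=
  Quotient.lift (fun p => φ p.1 * p.2) (by
    intro a b h
    induction h with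
    | rel x y hxy =>
      obtain ⟨m, t, n⟩ := hxy
      show φ (m • t) * n = φ t * (φ m * n)
      rw [smul_eq_mul, map_mul]
      rw [mul_assoc, mul_left_comm]
    | refl x => rfl
    | symm x y _ ih => exact ih.symm
    | trans x y z _ _ ih₁ ih₂ => exact ih₁.trans ih₂)

@[simp] lemma MTensor.toN_mk (φ : M →* N) (m : M) (n : N) :
    MTensor.toN φ (MTensor.mk φ m n) = φ m * n := rfl

lemma MTensor.mk_eq (φ : M →* N) (m : M) (n : N) :
    MTensor.mk φ m n = MTensor.mk φ 1 (φ m * n) := by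
  refine Quotient.sound (Relation.EqvGen.rel _ _ ?_)
  have := TensorRel.mk (φ := φ) (T := M) m 1 n
  rwa [smul_eq_mul, mul_one] at this

end Aux

/-- A local flat epimorphism of commutative monoids is an isomorphism (bijective). -/
theorem local_flat_epi_bijective {M N : Type} [CommMonoid M] [CommMonoid N]
    (φ : M →* N) (hepi : MonEpi φ) (hloc : ∀ m : M, IsUnit (φ m) → IsUnit m)
    (hflat : MonFlat φ) : Function.Bijective φ := by
  constructor
  · -- injectivity, via equalizer flatness
    intro a b hab
    set f : M →[M] M := ⟨fun x => x * a, fun m x => mul_assoc m x a⟩ with hf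
    set g : M →[M] M := ⟨fun x => x * b, fun m x => mul_assoc m x b⟩ with hg
    have h1 : MTensor.map φ f (MTensor.mk φ 1 1) = MTensor.map φ g (MTensor.mk φ 1 1) := by
      show MTensor.mk φ (f 1) 1 = MTensor.mk φ (g 1) 1
      show MTensor.mk φ (1 * a) 1 = MTensor.mk φ (1 * b) 1
      rw [one_mul, one_mul, MTensor.mk_eq φ a 1, MTensor.mk_eq φ b 1, hab]
    obtain ⟨y, hy⟩ := (hflat.2.2 M M f g).2 ⟨MTensor.mk φ 1 1, h1⟩
    obtain ⟨p, rfl⟩ := Quotient.exists_rep y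
    have hy1 : MTensor.mk φ (p.1 : M) p.2 = MTensor.mk φ 1 1 :=
      congrArg Subtype.val hy
    have he : φ (p.1 : M) * p.2 = 1 := by
      have := congrArg (MTensor.toN φ) hy1
      simpa using this
    obtain ⟨u, hu⟩ := hloc _ (IsUnit.of_mul_eq_one _ he)
    have hab' : (p.1 : M) * a = (p.1 : M) * b := p.1.2
    have : (u : M) * a = (u : M) * b := by rw [hu]; exact hab'
    calc a = (u⁻¹ : Mˣ) * ((u : M) * a) := by rw [← mul_assoc, Units.inv_mul, one_mul]
    _ = (u⁻¹ : Mˣ) * ((u : M) * b) := by rw [this]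
    _ = b := by rw [← mul_assoc, Units.inv_mul, one_mul]
  · -- surjectivity, via product flatness
    intro n
    obtain ⟨x, hx⟩ := (hflat.1 M M).2 (MTensor.mk φ 1 n, MTensor.mk φ 1 1)
    obtain ⟨p, rfl⟩ := Quotient.exists_rep x
    have h1 : MTensor.mk φ p.1.1 p.2 = MTensor.mk φ 1 n := congrArg Prod.fst hx
    have h2 : MTensor.mk φ p.1.2 p.2 = MTensor.mk φ 1 1 := congrArg Prod.snd hx
    have e1 : φ p.1.1 * p.2 = n := by
      have := congrArg (MTensor.toN φ) h1; simpa using this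
    have e2 : φ p.1.2 * p.2 = 1 := by
      have := congrArg (MTensor.toN φ) h2; simpa using this
    obtain ⟨u, hu⟩ := hloc _ (IsUnit.of_mul_eq_one _ e2)
    have hp2 : p.2 = φ ((u⁻¹ : Mˣ) : M) := by
      have : φ ((u⁻¹ : Mˣ) : M) * (φ p.1.2 * p.2) = φ ((u⁻¹ : Mˣ) : M) := by
        rw [e2, mul_one]
      rw [← this, ← mul_assoc, ← map_mul, ← hu, Units.inv_mul, map_one, one_mul]
    exact ⟨p.1.1 * ((u⁻¹ : Mˣ) : M), by rw [map_mul, ← hp2, e1]⟩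
end

section
/- If φ: M → N is a flat epimorphism of finite presentation of commutative monoids, then there exists a ∈ M such that N is isomorphic as an M-algebra to the localization M_a. Conversely, every localization M → M_a is a flat epimorphism of finite presentation. -/
open CategoryTheory CategoryTheory.Limits Opposite

/-- `φ : M →* N` is of finite presentation: the functor `Hom_{M-alg}(N, −)` on the
category of `M`-algebras (the under category of `M` in commutative monoids)
preserves filtered colimits. -/
def MonFinitePresentation {M N : Type} [CommMonoid M] [CommMonoid N] (φ : M →* N) : Prop :=
  PreservesFilteredColimits (coyoneda.obj (op (Under.mk (CommMonCat.ofHom φ))))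

section Aux
open Relation
variable {M N : Type} [CommMonoid M] [CommMonoid N]

theorem MTensor.mk_rel (φ : M →* N) {T : Type} [MulAction M T] (m : M) (t : T) (n : N) :
    MTensor.mk φ (m • t) n = MTensor.mk φ t (φ m * n) :=
  Quotient.sound (EqvGen.rel _ _ (TensorRel.mk m t n))

theorem MTensor.map_mk (φ : M →* N) {T U : Type} [MulAction M T] [MulAction M U]
    (f : T →[M] U) (t : T) (n : N) :
    MTensor.map φ f (MTensor.mk φ t n) = MTensor.mk φ (f t) n := rfl

theorem tensorProdCompare_mk (φ : M →* N) (T U : Type) [MulAction M T] [MulAction M U]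
    (p : T × U) (n : N) :
    tensorProdCompare φ T U (MTensor.mk φ p n) = (MTensor.mk φ p.1 n, MTensor.mk φ p.2 n) := rfl

theorem tensorEqCompare_val (φ : M →* N) {T U : Type} [MulAction M T] [MulAction M U]
    (f g : T →[M] U) (y : MTensor φ {t : T // f t = g t}) :
    (tensorEqCompare φ f g y).1 = MTensor.map φ (tensorEqIncl f g) y := rfl

theorem smul_congr {T : Type} [MulAction M T] {a b : M} (x : T) (h : a = b) :
    a • x = b • x := by rw [h]

theorem smul_mul_congr {T : Type} [MulAction M T] {x y : T} {A B : M}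
    (h : A • x = B • y) (C : M) : (C * A) • x = (C * B) • y := by
  rw [mul_smul, mul_smul, h]

end Aux

section Loc
variable {M : Type} [CommMonoid M] (S : Submonoid M)

abbrev lmap : M →* Localization S := (Localization.monoidOf S).toMonoidHom

theorem lmap_apply (m : M) : lmap S m = Localization.mk m 1 := rfl

theorem psi_mul_delta (m : M) (s : S) : lmap S m * Localization.mk 1 s = Localization.mk m s := by
  rw [lmap_apply, Localization.mk_mul, mul_one, one_mul]

theorem delta_mul_psi (s : S) : Localization.mk 1 s * lmap S (s : M) = 1 := by
  rw [lmap_apply, Localization.mk_mul, one_mul, mul_one,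
    Localization.mk_self]

theorem delta_shift (s c : S) :
    lmap S (c : M) * Localization.mk 1 (s * c) = Localization.mk 1 s := by
  rw [lmap_apply, Localization.mk_mul, mul_one, one_mul,
    Localization.mk_eq_mk_iff, Localization.r_iff_exists]
  exact ⟨1, by push_cast; simp [mul_comm]⟩

variable (T : Type) [MulAction M T]

theorem mk_denom_shift (t : T) (s c : S) :
    MTensor.mk (lmap S) ((c : M) • t) (Localization.mk 1 (s * c))
      = MTensor.mk (lmap S) t (Localization.mk 1 s) := by
  rw [MTensor.mk_rel, delta_shift]

theorem exists_rep (x : MTensor (lmap S) T) :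
    ∃ (t : T) (s : S), x = MTensor.mk (lmap S) t (Localization.mk 1 s) := by
  induction x using Quotient.inductionOn with
  | h p =>
    obtain ⟨t, n⟩ := p
    induction n using Localization.induction_on with
    | H y =>
      refine ⟨y.1 • t, y.2, ?_⟩
      show MTensor.mk (lmap S) t (Localization.mk y.1 y.2) = _
      rw [← psi_mul_delta, ← MTensor.mk_rel]

def locSetoid : Setoid (T × S) where
  r p q := ∃ u : S, ((u * q.2 : S) : M) • p.1 = ((u * p.2 : S) : M) • q.1
  iseqv := by
    constructor
    · exact fun p => ⟨1, rfl⟩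
    · rintro p q ⟨u, hu⟩; exact ⟨u, hu.symm⟩
    · rintro p q r ⟨u, hu⟩ ⟨v, hv⟩
      refine ⟨u * v * q.2, ?_⟩
      calc ((u * v * q.2 * r.2 : S) : M) • p.1
          = ((v * r.2 : S) : M) • (((u * q.2 : S) : M) • p.1) := by
            rw [smul_smul]; exact smul_congr _ (by push_cast; simp [mul_comm, mul_assoc, mul_left_comm])
        _ = ((v * r.2 : S) : M) • (((u * p.2 : S) : M) • q.1) := by rw [hu]
        _ = ((u * p.2 : S) : M) • (((v * r.2 : S) : M) • q.1) := by
            rw [smul_smul, smul_smul]; exact smul_congr _ (by push_cast; simp [mul_comm, mul_assoc, mul_left_comm])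
        _ = ((u * p.2 : S) : M) • (((v * q.2 : S) : M) • r.1) := by rw [hv]
        _ = ((u * v * q.2 * p.2 : S) : M) • r.1 := by
            rw [smul_smul]; exact smul_congr _ (by push_cast; simp [mul_comm, mul_assoc, mul_left_comm])

def Fmap : MTensor (lmap S) T → Quotient (locSetoid S T) :=
  Quotient.lift (fun p : T × Localization S =>
    Localization.liftOn p.2 (fun m s => Quotient.mk (locSetoid S T) (m • p.1, s)) (by
      intro a c b d h
      rw [Localization.r_iff_exists] at h
      obtain ⟨u, hu⟩ := h
      refine Quotient.sound ⟨u, ?_⟩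
      show ((u * d : S) : M) • a • p.1 = ((u * b : S) : M) • c • p.1
      rw [smul_smul, smul_smul]
      exact smul_congr _ (by push_cast at hu ⊢; rw [mul_assoc, hu, mul_assoc]))) (by
    intro a b h
    induction h with
    | rel x y hxy =>
      obtain ⟨m, t, n⟩ := hxy
      induction n using Localization.induction_on with
      | H y =>
        show Localization.liftOn (Localization.mk y.1 y.2) _ _ =
          Localization.liftOn (lmap S m * Localization.mk y.1 y.2) _ _
        rw [lmap_apply, Localization.mk_mul, one_mul]
        rw [Localization.liftOn_mk, Localization.liftOn_mk]
        refine congrArg _ (Prod.ext ?_ rfl)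
        show y.1 • m • t = (m * y.1) • t
        rw [smul_smul, mul_comm]
    | refl x => rfl
    | symm x y _ ih => exact ih.symm
    | trans x y z _ _ ih₁ ih₂ => exact ih₁.trans ih₂)

theorem Fmap_mk (t : T) (s : S) :
    Fmap S T (MTensor.mk (lmap S) t (Localization.mk 1 s))
      = Quotient.mk (locSetoid S T) (t, s) :=
  congrArg (Quotient.mk (locSetoid S T)) (Prod.ext (one_smul M t) rfl)

theorem exists_of_mk_eq {t t' : T} {s s' : S}
    (h : MTensor.mk (lmap S) t (Localization.mk 1 s)
      = MTensor.mk (lmap S) t' (Localization.mk 1 s')) :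
    ∃ u : S, ((u * s' : S) : M) • t = ((u * s : S) : M) • t' := by
  have := congrArg (Fmap S T) h
  rw [Fmap_mk, Fmap_mk] at this
  exact Quotient.exact this

theorem exists_of_mk_eq' {t t' : T} {s : S}
    (h : MTensor.mk (lmap S) t (Localization.mk 1 s)
      = MTensor.mk (lmap S) t' (Localization.mk 1 s)) :
    ∃ c : S, (c : M) • t = (c : M) • t' := by
  obtain ⟨u, hu⟩ := exists_of_mk_eq S T h
  exact ⟨u * s, hu⟩

theorem mk_delta_eq_iff {t t' : T} {s s' : S} :
    MTensor.mk (lmap S) t (Localization.mk 1 s)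
      = MTensor.mk (lmap S) t' (Localization.mk 1 s')
    ↔ ∃ u : S, ((u * s' : S) : M) • t = ((u * s : S) : M) • t' := by
  constructor
  · exact exists_of_mk_eq S T
  · rintro ⟨u, hu⟩
    rw [← mk_denom_shift S T t s (u * s'), ← mk_denom_shift S T t' s' (u * s), hu]
    exact congrArg (MTensor.mk _ _)
      (congrArg (Localization.mk 1) (by simp [mul_comm, mul_left_comm]))
end Loc
section LocFlat
variable {M : Type} [CommMonoid M] (S : Submonoid M)

theorem monFlat_lmap : MonFlat (lmap S) := by
  refine ⟨?_, ⟨⟨MTensor.mk (lmap S) PUnit.unit 1⟩, ?_⟩, ?_⟩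
  · intro T U _ _
    constructor
    · -- injective
      intro z z' h
      obtain ⟨p, s, rfl⟩ := exists_rep S (T × U) z
      obtain ⟨p', s', rfl⟩ := exists_rep S (T × U) z'
      -- move to a common denominator d = s * s'
      rw [← mk_denom_shift S (T × U) p s s', ← mk_denom_shift S (T × U) p' s' s,
        show s' * s = s * s' from mul_comm _ _] at h ⊢
      set d := s * s' with hd
      rw [tensorProdCompare_mk, tensorProdCompare_mk, Prod.mk.injEq] at h
      obtain ⟨h1, h2⟩ := h
      simp only [Prod.smul_fst, Prod.smul_snd] at h1 h2
      obtain ⟨c₁, hc₁⟩ := exists_of_mk_eq' S T h1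
      obtain ⟨c₂, hc₂⟩ := exists_of_mk_eq' S U h2
      rw [← mk_denom_shift S (T × U) _ d (c₁ * c₂), ← mk_denom_shift S (T × U) _ d (c₁ * c₂)]
      refine congrArg (fun q => MTensor.mk (lmap S) q (Localization.mk 1 (d * (c₁ * c₂)))) ?_
      refine Prod.ext ?_ ?_
      · show ((c₁ * c₂ : S) : M) • ((s' : M) • p).1 = ((c₁ * c₂ : S) : M) • ((s : M) • p').1
        simp only [Prod.smul_fst]
        calc ((c₁ * c₂ : S) : M) • ((s' : M) • p.1)
            = ((c₂ : M) * (c₁ : M)) • ((s' : M) • p.1) := by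
              exact smul_congr _ (by push_cast; rw [mul_comm])
          _ = ((c₂ : M) * (c₁ : M)) • ((s : M) • p'.1) := by
              rw [mul_smul, mul_smul, hc₁]
          _ = ((c₁ * c₂ : S) : M) • ((s : M) • p'.1) := by
              exact smul_congr _ (by push_cast; rw [mul_comm])
      · show ((c₁ * c₂ : S) : M) • ((s' : M) • p).2 = ((c₁ * c₂ : S) : M) • ((s : M) • p').2
        simp only [Prod.smul_snd]
        calc ((c₁ * c₂ : S) : M) • ((s' : M) • p.2)
            = ((c₁ : M) * (c₂ : M)) • ((s' : M) • p.2) := by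
              exact smul_congr _ (by push_cast; rfl)
          _ = ((c₁ : M) * (c₂ : M)) • ((s : M) • p'.2) := by
              rw [mul_smul, mul_smul, hc₂]
          _ = ((c₁ * c₂ : S) : M) • ((s : M) • p'.2) := by
              exact smul_congr _ (by push_cast; rfl)
    · -- surjective
      rintro ⟨x, y⟩
      obtain ⟨t, s, rfl⟩ := exists_rep S T x
      obtain ⟨u, s', rfl⟩ := exists_rep S U y
      refine ⟨MTensor.mk (lmap S) ((s' : M) • t, (s : M) • u) (Localization.mk 1 (s * s')), ?_⟩
      rw [tensorProdCompare_mk]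
      refine Prod.ext ?_ ?_
      · exact mk_denom_shift S T t s s'
      · show MTensor.mk (lmap S) ((s : M) • u) (Localization.mk 1 (s * s')) = _
        rw [show s * s' = s' * s from mul_comm _ _]
        exact mk_denom_shift S U u s' s
  · -- subsingleton of PUnit tensor
    constructor
    intro x y
    obtain ⟨t, s, rfl⟩ := exists_rep S PUnit x
    obtain ⟨t', s', rfl⟩ := exists_rep S PUnit y
    rw [mk_delta_eq_iff]
    exact ⟨1, Subsingleton.elim _ _⟩
  · -- equalizers
    intro T U _ _ f g
    constructor
    · intro y y' h
      obtain ⟨e, s, rfl⟩ := exists_rep S _ y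
      obtain ⟨e', s', rfl⟩ := exists_rep S _ y'
      have h' : MTensor.mk (lmap S) (e : {t : T // f t = g t}).1 (Localization.mk 1 s)
          = MTensor.mk (lmap S) (e' : {t : T // f t = g t}).1 (Localization.mk 1 s') :=
        congrArg Subtype.val h
      rw [mk_delta_eq_iff] at h' ⊢
      obtain ⟨c, hc⟩ := h'
      refine ⟨c, Subtype.ext ?_⟩
      show ((c * s' : S) : M) • e.1 = ((c * s : S) : M) • e'.1
      exact hc
    · rintro ⟨x, hx⟩
      obtain ⟨t, s, rfl⟩ := exists_rep S T x
      rw [MTensor.map_mk, MTensor.map_mk] at hx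
      obtain ⟨c, hc⟩ := exists_of_mk_eq' S U hx
      have hfix : f ((c : M) • t) = g ((c : M) • t) := by
        rw [map_smul, map_smul]; exact hc
      refine ⟨MTensor.mk (lmap S) (⟨(c : M) • t, hfix⟩ : {t : T // f t = g t})
        (Localization.mk 1 (s * c)), ?_⟩
      refine Subtype.ext ?_
      rw [tensorEqCompare_val, MTensor.map_mk]
      exact mk_denom_shift S T t s c

theorem monEpi_lmap : MonEpi (lmap S) := by
  intro P _ f g h
  have hrestr : ∀ m : M, f (lmap S m) = g (lmap S m) := fun m => DFunLike.congr_fun h m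
  ext x
  induction x using Localization.induction_on with
  | H y =>
    obtain ⟨m, s⟩ := y
    have h1 : f (Localization.mk 1 s) * f (lmap S (s : M)) = 1 := by
      rw [← map_mul, delta_mul_psi, map_one]
    have h2 : g (Localization.mk 1 s) * g (lmap S (s : M)) = 1 := by
      rw [← map_mul, delta_mul_psi, map_one]
    have hunit : f (Localization.mk 1 s) = g (Localization.mk 1 s) := by
      calc f (Localization.mk 1 s)
          = f (Localization.mk 1 s) * (g (Localization.mk 1 s) * g (lmap S (s : M))) := by
            rw [h2, mul_one]
        _ = g (Localization.mk 1 s) * (f (Localization.mk 1 s) * f (lmap S (s : M))) := by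
            rw [hrestr]; exact mul_left_comm _ _ _
        _ = g (Localization.mk 1 s) := by rw [h1, mul_one]
    show f (Localization.mk m s) = g (Localization.mk m s)
    rw [← psi_mul_delta, map_mul, map_mul, hrestr, hunit]

end LocFlat
section UnderForget
open CategoryTheory CategoryTheory.Limits

universe w v u

variable {C : Type u} [Category.{v} C] {X : C} {J : Type w} [Category.{w} J] [IsFiltered J]

/-- For a filtered diagram in an under category, the forgetful functor maps colimit
cocones to colimit cocones. -/
noncomputable def underForgetIsColimit (D : J ⥤ Under X) {c : Cocone D} (hc : IsColimit c) :
    IsColimit ((Under.forget X).mapCocone c) := by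
  have j₀ : J := Nonempty.some IsFiltered.nonempty
  -- every cocone over the underlying diagram has a canonical `Under` structure
  have hconst : ∀ (s : Cocone (D ⋙ Under.forget X)) (j : J),
      (D.obj j).hom ≫ s.ι.app j = (D.obj j₀).hom ≫ s.ι.app j₀ := by
    intro s j
    have e1 : s.ι.app j = (D.map (IsFiltered.rightToMax j₀ j)).right ≫
        s.ι.app (IsFiltered.max j₀ j) := by
      have := s.ι.naturality (IsFiltered.rightToMax j₀ j)
      exact (this.trans (Category.comp_id _)).symm
    have e2 : s.ι.app j₀ = (D.map (IsFiltered.leftToMax j₀ j)).right ≫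
        s.ι.app (IsFiltered.max j₀ j) := by
      have := s.ι.naturality (IsFiltered.leftToMax j₀ j)
      exact (this.trans (Category.comp_id _)).symm
    rw [e1, e2]
    have w1 := Under.w (D.map (IsFiltered.rightToMax j₀ j))
    have w2 := Under.w (D.map (IsFiltered.leftToMax j₀ j))
    calc _ = ((D.obj j).hom ≫ (D.map (IsFiltered.rightToMax j₀ j)).right) ≫
          s.ι.app (IsFiltered.max j₀ j) := (Category.assoc _ _ _).symm
      _ = ((D.obj j₀).hom ≫ (D.map (IsFiltered.leftToMax j₀ j)).right) ≫
          s.ι.app (IsFiltered.max j₀ j) :=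
        congrArg (fun q => q ≫ s.ι.app (IsFiltered.max j₀ j)) (w1.trans w2.symm)
      _ = _ := Category.assoc _ _ _
  let mkCocone : Cocone (D ⋙ Under.forget X) → Cocone D := fun s =>
    { pt := Under.mk ((D.obj j₀).hom ≫ s.ι.app j₀)
      ι :=
        { app := fun j => Under.homMk (s.ι.app j) (hconst s j)
          naturality := fun j j' f => by
            apply Under.UnderMorphism.ext
            have := s.ι.naturality f
            exact this } }
  refine
    { desc := fun s => (hc.desc (mkCocone s)).right
      fac := fun s j => ?_
      uniq := fun s m hm => ?_ }
  · have h2 := congrArg CommaMorphism.right (hc.fac (mkCocone s) j)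
    exact h2
  · -- uniqueness
    have hup : Under.homMk (V := Under.mk ((D.obj j₀).hom ≫ s.ι.app j₀)) m
        (by
          have hw : (D.obj j₀).hom ≫ (c.ι.app j₀).right = c.pt.hom := Under.w (c.ι.app j₀)
          rw [← hw]; refine (Category.assoc _ _ _).trans ?_
          exact congrArg (fun q => (D.obj j₀).hom ≫ q) (hm j₀)) = hc.desc (mkCocone s) := by
      refine hc.uniq (mkCocone s) _ (fun j => ?_)
      apply Under.UnderMorphism.ext
      exact hm j
    exact congrArg CommaMorphism.right hup

end UnderForget
section FP
open CategoryTheory CategoryTheory.Limits Opposite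

variable {M : Type} [CommMonoid M]

/-- The structure map of an `M`-algebra, as a monoid hom. -/
def algMap (X : Under (CommMonCat.of M)) : M →* X.right := X.hom.hom

/-- A morphism in `CommMonCat`, as a monoid hom. -/
abbrev mhom {A B : CommMonCat} (f : A ⟶ B) : A →* B := f.hom

/-- The localization `M_a` as an `M`-algebra. -/
def locAlg (a : M) : Under (CommMonCat.of M) :=
  Under.mk (CommMonCat.ofHom (lmap (Submonoid.powers a)))

theorem locAlg_hom_ext {a : M} {X : Under (CommMonCat.of M)} (f g : locAlg a ⟶ X) : f = g := by
  have h : mhom f.right = mhom g.right :=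
    monEpi_lmap (Submonoid.powers a) _ _ _ ((congrArg CommMonCat.Hom.hom (Under.w f)).trans
      (congrArg CommMonCat.Hom.hom (Under.w g)).symm)
  exact Under.UnderMorphism.ext (CommMonCat.hom_ext h)

theorem locAlgHom_units {a : M} {X : Under (CommMonCat.of M)} (h : IsUnit (algMap X a)) :
    ∀ s : Submonoid.powers a, IsUnit (algMap X (s : M)) := by
  rintro ⟨s, k, rfl⟩
  rw [map_pow]
  exact h.pow k

/-- If `a` becomes a unit in `X` then there is an algebra map `M_a ⟶ X`. -/
noncomputable def locAlgHom {a : M} {X : Under (CommMonCat.of M)} (h : IsUnit (algMap X a)) :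
    locAlg a ⟶ X :=
  Under.homMk (CommMonCat.ofHom ((Localization.monoidOf (Submonoid.powers a)).lift
      (locAlgHom_units h)))
    (by exact CommMonCat.hom_ext ((Localization.monoidOf (Submonoid.powers a)).lift_comp (locAlgHom_units h)))

theorem isUnit_of_locAlgHom {a : M} {X : Under (CommMonCat.of M)} (f : locAlg a ⟶ X) :
    IsUnit (algMap X a) := by
  have hw : algMap X = (mhom f.right).comp (lmap (Submonoid.powers a)) := (congrArg CommMonCat.Hom.hom (Under.w f)).symm
  rw [hw]
  exact IsUnit.map (mhom f.right)
    ((Localization.monoidOf (Submonoid.powers a)).map_units ⟨a, Submonoid.mem_powers a⟩)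

theorem monFP_lmap (a : M) : MonFinitePresentation (lmap (Submonoid.powers a)) := by
  constructor
  intro J _ _
  constructor
  intro K
  constructor
  intro c hc
  have hUnder : IsColimit ((Under.forget (CommMonCat.of M)).mapCocone c) :=
    underForgetIsColimit K hc
  have hType : IsColimit
      ((forget CommMonCat).mapCocone ((Under.forget (CommMonCat.of M)).mapCocone c)) :=
    isColimitOfPreserves (forget CommMonCat) hUnder
  set t' := (forget CommMonCat).mapCocone ((Under.forget (CommMonCat.of M)).mapCocone c)
  constructor
  apply Types.FilteredColimit.isColimitOf
  · -- joint surjectivity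
    intro x
    have hu : IsUnit (algMap c.pt a) := isUnit_of_locAlgHom x
    rw [isUnit_iff_exists_inv] at hu
    obtain ⟨b, hb⟩ := hu
    obtain ⟨j, y₀, hy₀⟩ := Types.jointly_surjective _ hType b
    let y₁ : (K.obj j).right := y₀
    have hy₁ : (mhom (c.ι.app j).right) y₁ = b := hy₀
    have hone : (mhom (c.ι.app j).right) (algMap (K.obj j) a * y₁)
        = (mhom (c.ι.app j).right) 1 := by
      rw [map_one, map_mul]
      have hca : (mhom (c.ι.app j).right).comp (algMap (K.obj j)) = algMap c.pt :=
        congrArg CommMonCat.Hom.hom (Under.w (c.ι.app j))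
      have hca2 : (mhom (c.ι.app j).right) ((algMap (K.obj j)) a) = algMap c.pt a :=
        DFunLike.congr_fun hca a
      rw [hca2, hy₁]
      exact hb
    obtain ⟨k, f, g', hfg⟩ := (Types.FilteredColimit.isColimit_eq_iff _ hType).mp
      (show t'.ι.app j (algMap (K.obj j) a * y₁) = t'.ι.app j 1 from hone)
    have hfg' : (mhom (K.map f).right) (algMap (K.obj j) a * y₁)
        = (mhom (K.map g').right) 1 := hfg
    rw [map_one, map_mul] at hfg'
    have hstr : (mhom (K.map f).right).comp (algMap (K.obj j)) = algMap (K.obj k) :=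
      congrArg CommMonCat.Hom.hom (Under.w (K.map f))
    have hstr2 : (mhom (K.map f).right) ((algMap (K.obj j)) a) = algMap (K.obj k) a :=
      DFunLike.congr_fun hstr a
    rw [hstr2] at hfg'
    have hu' : IsUnit (algMap (K.obj k) a) := IsUnit.of_mul_eq_one _ hfg'
    exact ⟨k, locAlgHom hu', locAlg_hom_ext _ _⟩
  · -- joint injectivity
    intro i j σ τ _
    exact ⟨IsFiltered.max i j, IsFiltered.leftToMax i j, IsFiltered.rightToMax i j,
      locAlg_hom_ext _ _⟩

end FP
section Forward
open Relation
variable {M N : Type} [CommMonoid M] [CommMonoid N]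

/-- The multiplication map `M ⊗_M N → N`. -/
def wmap (φ : M →* N) : MTensor φ M → N :=
  Quotient.lift (fun p : M × N => φ p.1 * p.2) (by
    intro a b h
    induction h with
    | rel x y hxy =>
      obtain ⟨m, t, n⟩ := hxy
      show φ (m • t) * n = φ t * (φ m * n)
      rw [smul_eq_mul, map_mul, mul_assoc]
      exact mul_left_comm (φ m) (φ t) n
    | refl x => rfl
    | symm x y _ ih => exact ih.symm
    | trans x y z _ _ ih₁ ih₂ => exact ih₁.trans ih₂)

theorem wmap_mk (φ : M →* N) (t : M) (n : N) : wmap φ (MTensor.mk φ t n) = φ t * n := rfl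

theorem wmap_injective (φ : M →* N) : Function.Injective (wmap φ) := by
  have : Function.LeftInverse (fun n => MTensor.mk φ 1 n) (wmap φ) := by
    intro z
    induction z using Quotient.inductionOn with
    | h p =>
      obtain ⟨t, n⟩ := p
      show MTensor.mk φ 1 (φ t * n) = MTensor.mk φ t n
      rw [← MTensor.mk_rel]
      rw [smul_eq_mul, mul_one]
  exact this.injective

/-- equational consequence of flatness -/
theorem flat_equation (φ : M →* N) (hflat : MonFlat φ) {u v : M} {x x' : N}
    (h : φ u * x = φ v * x') :
    ∃ (z : N) (c c' : M), x = φ c * z ∧ x' = φ c' * z ∧ c * u = c' * v := by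
  obtain ⟨ξ, hξ⟩ := (hflat.1 M M).2 (MTensor.mk φ 1 x, MTensor.mk φ 1 x')
  obtain ⟨⟨⟨c, c'⟩, z⟩, rfl⟩ := Quotient.exists_rep ξ
  have hξ' : (MTensor.mk φ c z, MTensor.mk φ c' z) = (MTensor.mk φ 1 x, MTensor.mk φ 1 x') := hξ
  rw [Prod.mk.injEq] at hξ'
  have hx : φ c * z = x := by
    have := congrArg (wmap φ) hξ'.1; rwa [wmap_mk, wmap_mk, map_one, one_mul] at this
  have hx' : φ c' * z = x' := by
    have := congrArg (wmap φ) hξ'.2; rwa [wmap_mk, wmap_mk, map_one, one_mul] at this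
  set f : (M × M) →[M] M := ⟨fun p => p.1 * u, by
    intro m p; show (m • p).1 * u = m • (p.1 * u); rw [Prod.smul_fst, smul_eq_mul, smul_eq_mul, mul_assoc]⟩ with hf
  set g : (M × M) →[M] M := ⟨fun p => p.2 * v, by
    intro m p; show (m • p).2 * v = m • (p.2 * v); rw [Prod.smul_snd, smul_eq_mul, smul_eq_mul, mul_assoc]⟩ with hg
  have heq : MTensor.map φ f (MTensor.mk φ (c, c') z) = MTensor.map φ g (MTensor.mk φ (c, c') z) := by
    rw [MTensor.map_mk, MTensor.map_mk]
    apply wmap_injective φ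
    rw [wmap_mk, wmap_mk]
    show φ (c * u) * z = φ (c' * v) * z
    rw [map_mul, map_mul, mul_comm (φ c) (φ u), mul_comm (φ c') (φ v), mul_assoc, mul_assoc,
      hx, hx', h]
  obtain ⟨η, hη⟩ := (hflat.2.2 (M × M) M f g).2 ⟨MTensor.mk φ (c, c') z, heq⟩
  obtain ⟨⟨⟨⟨c₁, c₁'⟩, hcc⟩, z₁⟩, rfl⟩ := Quotient.exists_rep η
  have hval : MTensor.mk φ (c₁, c₁') z₁ = MTensor.mk φ (c, c') z := congrArg Subtype.val hη
  have hcomp := congrArg (tensorProdCompare φ M M) hval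
  rw [tensorProdCompare_mk, tensorProdCompare_mk, Prod.mk.injEq] at hcomp
  have h1 : φ c₁ * z₁ = x := by
    have := congrArg (wmap φ) hcomp.1; rw [wmap_mk, wmap_mk] at this; rw [this]; exact hx
  have h2 : φ c₁' * z₁ = x' := by
    have := congrArg (wmap φ) hcomp.2; rw [wmap_mk, wmap_mk] at this; rw [this]; exact hx'
  exact ⟨z₁, c₁, c₁', h1.symm, h2.symm, hcc⟩

/-- cancellation consequence of flatness -/
theorem flat_cancel (φ : M →* N) (hflat : MonFlat φ) {u v : M} (h : φ u = φ v) :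
    ∃ c : M, IsUnit (φ c) ∧ c * u = c * v := by
  set f : M →[M] M := ⟨fun p => p * u, by
    intro m p; show (m • p) * u = m • (p * u); rw [smul_eq_mul, smul_eq_mul, mul_assoc]⟩ with hf
  set g : M →[M] M := ⟨fun p => p * v, by
    intro m p; show (m • p) * v = m • (p * v); rw [smul_eq_mul, smul_eq_mul, mul_assoc]⟩ with hg
  have heq : MTensor.map φ f (MTensor.mk φ 1 1) = MTensor.map φ g (MTensor.mk φ 1 1) := by
    rw [MTensor.map_mk, MTensor.map_mk]
    apply wmap_injective φ
    show φ ((1 : M) * u) * 1 = φ ((1 : M) * v) * 1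
    rw [one_mul, one_mul, h]
  obtain ⟨η, hη⟩ := (hflat.2.2 M M f g).2 ⟨MTensor.mk φ 1 1, heq⟩
  obtain ⟨⟨⟨c, hc⟩, z⟩, rfl⟩ := Quotient.exists_rep η
  have hval : MTensor.mk φ c z = MTensor.mk φ 1 1 := congrArg Subtype.val hη
  have h1 : φ c * z = 1 := by
    have := congrArg (wmap φ) hval; rwa [wmap_mk, wmap_mk, map_one, one_mul] at this
  exact ⟨c, IsUnit.of_mul_eq_one z h1, hc⟩

/-- common-divisor relation -/
def CDRel (φ : M →* N) (n n' : N) : Prop := ∃ (x : N) (m₁ m₂ : M), n = φ m₁ * x ∧ n' = φ m₂ * x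

theorem cdrel_trans (φ : M →* N) (hflat : MonFlat φ) {a b c : N}
    (h1 : CDRel φ a b) (h2 : CDRel φ b c) : CDRel φ a c := by
  obtain ⟨x, m₁, m₂, rfl, hb⟩ := h1
  obtain ⟨x', m₃, m₄, hb', rfl⟩ := h2
  obtain ⟨z, d, d', hx, hx', -⟩ := flat_equation φ hflat (hb ▸ hb')
  exact ⟨z, m₁ * d, m₄ * d', by rw [hx, map_mul, mul_assoc], by rw [hx', map_mul, mul_assoc]⟩

theorem cdrel_total (φ : M →* N) (hflat : MonFlat φ) (n n' : N) : CDRel φ n n' := by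
  have hsub := hflat.2.1.2
  have hEq : EqvGen (TensorRel φ PUnit) (PUnit.unit, n) (PUnit.unit, n') :=
    Quotient.exact (@Subsingleton.elim _ hsub
      (MTensor.mk φ PUnit.unit n) (MTensor.mk φ PUnit.unit n'))
  suffices H : ∀ p q : PUnit × N, EqvGen (TensorRel φ PUnit) p q → CDRel φ p.2 q.2 from
    H _ _ hEq
  intro p q h
  induction h with
  | rel x y hxy =>
    obtain ⟨m, t, n⟩ := hxy
    exact ⟨n, 1, m, by rw [map_one, one_mul], rfl⟩
  | refl x => exact ⟨x.2, 1, 1, by rw [map_one, one_mul], by rw [map_one, one_mul]⟩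
  | symm x y _ ih => obtain ⟨z, m₁, m₂, hz₁, hz₂⟩ := ih; exact ⟨z, m₂, m₁, hz₂, hz₁⟩
  | trans x y z _ _ ih₁ ih₂ => exact cdrel_trans φ hflat ih₁ ih₂

/-- the flat algebra is the localization at the preimage of the units -/
theorem flat_iso_localization (φ : M →* N) (hflat : MonFlat φ) :
    ∃ e : Localization (Submonoid.comap φ (IsUnit.submonoid N)) ≃* N,
      ∀ m : M, e ((Localization.monoidOf (Submonoid.comap φ (IsUnit.submonoid N))) m)
        = φ m := by
  set S := Submonoid.comap φ (IsUnit.submonoid N) with hS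
  have hg : ∀ s : S, IsUnit (φ s) := fun s => s.2
  set ρ := (Localization.monoidOf S).lift hg with hρ
  have hρeq : ∀ m : M, ρ ((Localization.monoidOf S) m) = φ m := fun m =>
    (Localization.monoidOf S).lift_eq hg m
  have hinj : Function.Injective ρ := by
    rw [Submonoid.LocalizationMap.lift_injective_iff]
    intro a b
    constructor
    · intro hab
      rw [← Localization.mk_one_eq_monoidOf_mk, ← Localization.mk_one_eq_monoidOf_mk,
        Localization.mk_eq_mk_iff, Localization.r_iff_exists] at hab
      obtain ⟨c, hc⟩ := hab
      simp only [Submonoid.coe_one, one_mul] at hc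
      have : φ (↑c * a) = φ (↑c * b) := by rw [hc]
      rw [map_mul, map_mul] at this
      exact (hg c).mul_left_cancel this
    · intro hab
      obtain ⟨c, hcu, hc⟩ := flat_cancel φ hflat hab
      rw [← Localization.mk_one_eq_monoidOf_mk, ← Localization.mk_one_eq_monoidOf_mk,
        Localization.mk_eq_mk_iff, Localization.r_iff_exists]
      exact ⟨⟨c, hcu⟩, by simpa using hc⟩
  have hsurj : Function.Surjective ρ := by
    intro n
    obtain ⟨x, m₁, m₂, hn, h1⟩ := cdrel_total φ hflat n 1
    have hu2 : IsUnit (φ m₂) := IsUnit.of_mul_eq_one x h1.symm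
    refine ⟨Localization.mk m₁ ⟨m₂, hu2⟩, ?_⟩
    have key : Localization.mk m₁ (⟨m₂, hu2⟩ : S) * (Localization.monoidOf S) m₂
        = (Localization.monoidOf S) m₁ := by
      rw [← Localization.mk_one_eq_monoidOf_mk, ← Localization.mk_one_eq_monoidOf_mk,
        Localization.mk_mul, mul_one, Localization.mk_eq_mk_iff, Localization.r_iff_exists]
      exact ⟨1, by simp [mul_comm]⟩
    have := congrArg ρ key
    rw [map_mul, hρeq, hρeq] at this
    -- this : ρ (mk m₁ ⟨m₂⟩) * φ m₂ = φ m₁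
    have hn2 : n * φ m₂ = φ m₁ := by
      rw [hn, mul_assoc, mul_comm x (φ m₂), ← h1, mul_one]
    exact hu2.mul_right_cancel (by rw [this, hn2])
  exact ⟨MulEquiv.ofBijective ρ ⟨hinj, hsurj⟩, hρeq⟩

end Forward
section FwdFP
open CategoryTheory CategoryTheory.Limits Opposite

variable {M : Type} [CommMonoid M]

/-- Index category: elements of `S` ordered by divisibility. -/
structure LocIdx (S : Submonoid M) where
  elt : M
  mem : elt ∈ S

instance {S : Submonoid M} : Preorder (LocIdx S) where
  le a b := ∃ c : M, a.elt * c = b.elt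
  le_refl a := ⟨1, mul_one _⟩
  le_trans a b c := by
    rintro ⟨u, hu⟩ ⟨v, hv⟩
    exact ⟨u * v, by rw [← mul_assoc, hu, hv]⟩

instance {S : Submonoid M} : Nonempty (LocIdx S) := ⟨⟨1, one_mem S⟩⟩

instance {S : Submonoid M} : IsDirected (LocIdx S) (· ≤ ·) :=
  ⟨fun a b => ⟨⟨a.elt * b.elt, mul_mem a.mem b.mem⟩, ⟨b.elt, rfl⟩, ⟨a.elt, mul_comm _ _⟩⟩⟩

theorem dvd_isUnit {x y : M} (h : ∃ c, x * c = y) : IsUnit (algMap (locAlg y) x) := by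
  obtain ⟨c, rfl⟩ := h
  refine IsUnit.of_mul_eq_one
    (lmap (Submonoid.powers (x * c)) c * Localization.mk 1 ⟨x * c, Submonoid.mem_powers _⟩) ?_
  show lmap (Submonoid.powers (x * c)) x * _ = 1
  rw [← mul_assoc, ← map_mul, psi_mul_delta]
  exact Localization.mk_self ⟨x * c, Submonoid.mem_powers _⟩

/-- The filtered diagram of single-element localizations. -/
noncomputable def locDiagram (S : Submonoid M) : LocIdx S ⥤ Under (CommMonCat.of M) where
  obj a := locAlg a.elt
  map {a b} f := locAlgHom (dvd_isUnit (leOfHom f))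
  map_id a := locAlg_hom_ext _ _
  map_comp f g := locAlg_hom_ext _ _

end FwdFP
section FwdMain
open CategoryTheory CategoryTheory.Limits Opposite

variable {M N : Type} [CommMonoid M] [CommMonoid N]

theorem forward_main (φ : M →* N) (hflat : MonFlat φ) (hepi : MonEpi φ)
    (hfp : MonFinitePresentation φ) :
    ∃ (a : M) (e : N ≃* Localization (Submonoid.powers a)),
      ∀ m : M, e (φ m) = (Localization.monoidOf (Submonoid.powers a)).toMonoidHom m := by
  classical
  set S : Submonoid M := Submonoid.comap φ (IsUnit.submonoid N) with hSdef
  obtain ⟨e₀, he₀⟩ := flat_iso_localization φ hflat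
  set Nφ : Under (CommMonCat.of M) := Under.mk (CommMonCat.ofHom φ) with hNφ
  -- the cocone over the diagram of single-element localizations with point `N`
  have hunit : ∀ a : LocIdx S, IsUnit (algMap Nφ a.elt) := fun a => a.mem
  set C : Cocone (locDiagram S) :=
    { pt := Nφ
      ι :=
        { app := fun a => locAlgHom (hunit a)
          naturality := fun a b f => locAlg_hom_ext _ _ } } with hC
  -- it is a colimit cocone
  have hgs : ∀ (s : Cocone (locDiagram S)) (t : S), IsUnit (algMap s.pt (t : M)) :=
    fun s t => isUnit_of_locAlgHom (s.ι.app ⟨(t : M), t.2⟩)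
  have hdesc : ∀ s : Cocone (locDiagram S), Nφ ⟶ s.pt := fun s =>
    Under.homMk (CommMonCat.ofHom (((Localization.monoidOf S).lift (hgs s)).comp
      e₀.symm.toMonoidHom))
      (CommMonCat.hom_ext (MonoidHom.ext (fun m => by
        show ((Localization.monoidOf S).lift (hgs s)) (e₀.symm (φ m)) = algMap s.pt m
        have hm : e₀.symm (φ m) = (Localization.monoidOf S) m := by
          rw [← he₀ m, MulEquiv.symm_apply_apply]
        rw [hm]
        exact (Localization.monoidOf S).lift_eq (hgs s) m)))
  have hCcolim : IsColimit C :=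
    { desc := hdesc
      fac := fun s a => locAlg_hom_ext _ _
      uniq := fun s m hm => by
        refine Under.UnderMorphism.ext (CommMonCat.hom_ext (hepi _ _ _ ?_))
        have h1 : (mhom m.right).comp φ = algMap s.pt := congrArg CommMonCat.Hom.hom (Under.w m)
        have h2 : (mhom (hdesc s).right).comp φ = algMap s.pt := congrArg CommMonCat.Hom.hom (Under.w (hdesc s))
        exact h1.trans h2.symm }
  -- apply finite presentation
  haveI hfp' : PreservesFilteredColimits (coyoneda.obj (op Nφ)) := hfp
  have hc' : IsColimit ((coyoneda.obj (op Nφ)).mapCocone C) :=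
    isColimitOfPreserves (coyoneda.obj (op Nφ)) hCcolim
  obtain ⟨a, σ, hσ⟩ := Types.jointly_surjective _ hc' (𝟙 Nφ)
  have hσ' : σ ≫ C.ι.app a = 𝟙 Nφ := hσ
  have hισ : C.ι.app a ≫ σ = 𝟙 ((locDiagram S).obj a) := locAlg_hom_ext _ _
  have h3 : (mhom (C.ι.app a).right).comp (mhom σ.right) = MonoidHom.id N :=
    congrArg (fun f => f.right.hom) hσ'
  have h4 : (mhom σ.right).comp (mhom (C.ι.app a).right)
      = MonoidHom.id (Localization (Submonoid.powers a.elt)) :=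
    congrArg (fun f => f.right.hom) hισ
  have h5 : (mhom σ.right).comp φ = lmap (Submonoid.powers a.elt) := congrArg CommMonCat.Hom.hom (Under.w σ)
  refine ⟨a.elt,
    { toFun := mhom σ.right
      invFun := mhom (C.ι.app a).right
      left_inv := fun n => DFunLike.congr_fun h3 n
      right_inv := fun x => DFunLike.congr_fun h4 x
      map_mul' := map_mul (mhom σ.right) },
    fun m => DFunLike.congr_fun h5 m⟩

end FwdMain

/-- A map of commutative monoids is a flat epimorphism of finite presentation if and
only if it is (isomorphic as an `M`-algebra to) the localization of `M` at a single
element. -/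
theorem flat_epi_fp_iff_localization :
    (∀ (M N : Type) [CommMonoid M] [CommMonoid N] (φ : M →* N),
      MonFlat φ → MonEpi φ → MonFinitePresentation φ →
        ∃ (a : M) (e : N ≃* Localization (Submonoid.powers a)),
          ∀ m : M, e (φ m) = (Localization.monoidOf (Submonoid.powers a)).toMonoidHom m) ∧
    (∀ (M : Type) [CommMonoid M] (a : M),
      MonFlat ((Localization.monoidOf (Submonoid.powers a)).toMonoidHom) ∧
      MonEpi ((Localization.monoidOf (Submonoid.powers a)).toMonoidHom) ∧
      MonFinitePresentation ((Localization.monoidOf (Submonoid.powers a)).toMonoidHom)) := by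
  constructor
  · intro M N _ _ φ hflat hepi hfp
    exact forward_main φ hflat hepi hfp
  · intro M _ a
    exact ⟨monFlat_lmap _, monEpi_lmap _, monFP_lmap a⟩
end
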